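/- Let G be a finite group and 0 → Q → P → ℤ → 0 a short exact sequence of G-modules, where G acts trivially on ℤ, P is ℤ-free, and the image of P^G in ℤ is dℤ for some positive integer d. Then there is an exact sequence 0 → ℤ/dℤ → H¹(G, Q) → H¹(G, P) → 0. -/

import Mathlib

open groupCohomology

abbrev oneCocycles {G : Type} [Group G] (A : Rep ℤ G) := cocycles₁ A

abbrev oneCoboundaries {G : Type} [Group G] (A : Rep ℤ G) :=
  @Submodule.comap ℤ ℤ (cocycles₁ A) (G → A) _ _ _ _ (cocycles₁ A).module
    (@Pi.Function.module G ℤ A _ _ A.hV2) (RingHom.id ℤ) (cocycles₁ A).subtype (coboundaries₁ A)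

abbrev H1old {G : Type} [Group G] (A : Rep ℤ G) := oneCocycles A ⧸ oneCoboundaries A

theorem mem_oneCocycles_iff {G : Type} [Group G] {A : Rep ℤ G} (f : G → A) :
    f ∈ oneCocycles A ↔ ∀ g h : G, f (g * h) = A.ρ g (f h) + f g := mem_cocycles₁_iff f

theorem oneCocycles_ext {G : Type} [Group G] {A : Rep ℤ G} {f₁ f₂ : oneCocycles A}
    (h : ∀ g : G, f₁ g = f₂ g) : f₁ = f₂ := cocycles₁_ext h

theorem oneCocycles_map_one {G : Type} [Group G] {A : Rep ℤ G} (f : oneCocycles A) : f 1 = 0 :=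
  cocycles₁_map_one f

theorem mem_oneCoboundaries_iff {G : Type} [Group G] {A : Rep ℤ G} (f : oneCocycles A) :
    f ∈ oneCoboundaries A ↔ ∃ x : A, ∀ g : G, A.ρ g x - x = f g := by
  change (f : G → A) ∈ coboundaries₁ A ↔ _
  constructor
  · rintro ⟨x, hx⟩
    exact ⟨x, fun g => by rw [← hx]; rfl⟩
  · rintro ⟨x, hx⟩
    exact ⟨x, funext fun g => by rw [← hx g]; rfl⟩

noncomputable def H1oldEquiv {G : Type} [Group G] (A : Rep ℤ G) : H1old A ≃+ H1 A := by
  have hk : (oneCoboundaries A).toAddSubgroup = (H1π A).hom.toAddMonoidHom.ker := by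
    ext x
    rw [AddMonoidHom.mem_ker]
    exact (H1π_eq_zero_iff x).symm
  have hsurj : Function.Surjective (H1π A).hom.toAddMonoidHom :=
    (ModuleCat.epi_iff_surjective (H1π A)).1 inferInstance
  exact (QuotientAddGroup.quotientAddEquivOfEq hk).trans
    (QuotientAddGroup.quotientKerEquivOfSurjective _ hsurj)

set_option maxHeartbeats 2000000 in
/-- Let `G` be a finite group and `0 → Q → P → ℤ → 0` a short exact sequence of
`G`-modules, where `G` acts trivially on `ℤ`, `P` is `ℤ`-free, and the image of `P^G`
in `ℤ` is `dℤ` for a positive integer `d`. Then there is an exact sequence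
`0 → ℤ/dℤ → H¹(G, Q) → H¹(G, P) → 0`. -/
theorem h1_ses_onto_int_aux (G : Type) [Group G] [Finite G]
    (Q P : Type) [AddCommGroup Q] [Module ℤ Q] [AddCommGroup P] [Module ℤ P]
    [Module.Free ℤ P]
    (ρQ : Representation ℤ G Q) (ρP : Representation ℤ G P)
    (i : Q →ₗ[ℤ] P) (hi : Function.Injective i)
    (hiequiv : ∀ g : G, ∀ x : Q, i (ρQ g x) = ρP g (i x))
    (φ : P →ₗ[ℤ] ℤ) (hφ : Function.Surjective φ)
    (hφequiv : ∀ g : G, ∀ x : P, φ (ρP g x) = φ x)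
    (hexact : LinearMap.range i = LinearMap.ker φ)
    (d : ℕ) (hd : 0 < d)
    (himg : Submodule.map φ ρP.invariants = Submodule.span ℤ {(d : ℤ)}) :
    ∃ (α : ZMod d →+ H1old (Rep.of ρQ)) (β : H1old (Rep.of ρQ) →+ H1old (Rep.of ρP)),
      Function.Injective α ∧ Function.Surjective β ∧
        AddMonoidHom.range α = AddMonoidHom.ker β := by
  classical
  letI : Module ℤ ↥(oneCocycles (Rep.of ρQ)) := (oneCocycles (Rep.of ρQ)).module
  letI : Module ℤ ↥(oneCocycles (Rep.of ρP)) := (oneCocycles (Rep.of ρP)).module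
  letI : Module ℤ (H1old (Rep.of ρQ)) := Submodule.Quotient.module _
  letI : Module ℤ (H1old (Rep.of ρP)) := Submodule.Quotient.module _
  letI : Module ℤ (G → CoeSort.coe (Rep.of ρQ)) := Pi.Function.module G ℤ _
  letI : Module ℤ (G → CoeSort.coe (Rep.of ρP)) := Pi.Function.module G ℤ _
  obtain ⟨s, hs⟩ : ∃ s : ℤ → P, ∀ n, φ (s n) = n := ⟨fun n => (hφ n).choose,
    fun n => (hφ n).choose_spec⟩
  set j : P → Q := Function.invFun i with hjdef
  have hij : ∀ p : P, φ p = 0 → i (j p) = p := by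
    intro p hp
    have hmem : p ∈ LinearMap.range i := by rw [hexact]; exact hp
    obtain ⟨q, hq⟩ := hmem
    exact Function.invFun_eq ⟨q, hq⟩
  have hφi : ∀ q : Q, φ (i q) = 0 := by
    intro q
    have : i q ∈ LinearMap.ker φ := hexact ▸ LinearMap.mem_range_self i q
    exact this
  have hj0 : j 0 = 0 := hi (by rw [hij 0 (map_zero φ), map_zero])
  have hφc : ∀ (p : P) (g : G), φ (ρP g p - p) = 0 := fun p g => by
    rw [map_sub, hφequiv, sub_self]
  -- the cocycle associated to `p : P`
  have hcoc : ∀ p : P, (fun g => j (ρP g p - p)) ∈ oneCocycles (Rep.of ρQ) := by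
    intro p
    rw [mem_oneCocycles_iff]
    intro g h
    apply hi
    show i (j (ρP (g * h) p - p)) = i (ρQ g (j (ρP h p - p)) + j (ρP g p - p))
    rw [hij _ (hφc p (g * h)), map_add, hiequiv, hij _ (hφc p h), hij _ (hφc p g),
      map_mul]
    simp only [Module.End.mul_apply, map_sub]
    abel
  set zc : P → oneCocycles (Rep.of ρQ) := fun p => ⟨fun g => j (ρP g p - p), hcoc p⟩
    with hzc
  have hzcval : ∀ (p : P) (g : G), i (zc p g) = ρP g p - p := fun p g =>
    hij _ (hφc p g)
  set πQ := (oneCoboundaries (Rep.of ρQ)).mkQ with hπQ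
  set πP := (oneCoboundaries (Rep.of ρP)).mkQ with hπP
  have hπQ0 : ∀ f : oneCocycles (Rep.of ρQ), πQ f = 0 ↔ f ∈ oneCoboundaries (Rep.of ρQ) := by
    intro f
    rw [← LinearMap.mem_ker, Submodule.ker_mkQ]
  have hπP0 : ∀ f : oneCocycles (Rep.of ρP), πP f = 0 ↔ f ∈ oneCoboundaries (Rep.of ρP) := by
    intro f
    rw [← LinearMap.mem_ker, Submodule.ker_mkQ]
  have hπQeq : ∀ f f' : oneCocycles (Rep.of ρQ),
      f - f' ∈ oneCoboundaries (Rep.of ρQ) → πQ f = πQ f' := by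
    intro f f' h
    rw [← sub_eq_zero, ← map_sub]
    exact (hπQ0 _).2 h
  -- dependence only on φ p, modulo coboundaries
  have hdep : ∀ p p' : P, φ p = φ p' → πQ (zc p) = πQ (zc p') := by
    intro p p' hpp
    refine hπQeq _ _ ((mem_oneCoboundaries_iff _).2 ⟨j (p - p'), fun g => ?_⟩)
    apply hi
    show i (ρQ g (j (p - p')) - j (p - p')) = i ((zc p - zc p') g)
    have hsub : (zc p - zc p') g = zc p g - zc p' g := rfl
    rw [hsub, map_sub, map_sub, hiequiv, hij _ (by rw [map_sub, hpp, sub_self]),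
      hzcval, hzcval, map_sub]
    abel
  -- additivity of zc
  have hzcadd : ∀ p p' : P, zc (p + p') = zc p + zc p' := by
    intro p p'
    apply oneCocycles_ext
    intro g
    apply hi
    have hadd : (zc p + zc p') g = zc p g + zc p' g := rfl
    simp only [hadd, map_add, hzcval]
    abel
  -- the connecting map ℤ →+ H1(Q)
  set δ : ℤ →+ H1old (Rep.of ρQ) :=
    AddMonoidHom.mk' (fun m => πQ (zc (s m))) (by
      intro m n
      show πQ (zc (s (m + n))) = πQ (zc (s m)) + πQ (zc (s n))
      have h1 : πQ (zc (s (m + n))) = πQ (zc (s m + s n)) :=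
        hdep _ _ (by rw [map_add, hs, hs, hs])
      rw [h1, hzcadd, map_add]) with hδ
  have hδapp : ∀ m : ℤ, δ m = πQ (zc (s m)) := fun m => rfl
  -- δ kills d
  have hδd : δ ((d : ℕ) : ℤ) = 0 := by
    have hmem : ((d : ℕ) : ℤ) ∈ Submodule.map φ ρP.invariants := by
      rw [himg]; exact Submodule.mem_span_singleton_self _
    obtain ⟨p, hpinv, hpd⟩ := hmem
    have h1 : δ ((d : ℕ) : ℤ) = πQ (zc p) := by
      rw [hδapp]; exact hdep _ _ (by rw [hs, hpd])
    have h2 : zc p = 0 := by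
      apply oneCocycles_ext
      intro g
      show j (ρP g p - p) = _
      rw [hpinv g, sub_self, hj0]
      rfl
    rw [h1, h2, map_zero]
  set α : ZMod d →+ H1old (Rep.of ρQ) := ZMod.lift d ⟨δ, hδd⟩ with hα
  have hαapp : ∀ m : ℤ, α (m : ZMod d) = δ m := fun m => ZMod.lift_coe d _ m
  -- β on cocycles
  have hβcoc : ∀ f : oneCocycles (Rep.of ρQ),
      (fun g => i (f g)) ∈ oneCocycles (Rep.of ρP) := by
    intro f
    rw [mem_oneCocycles_iff]
    intro g h
    have h1 := (mem_oneCocycles_iff (A := Rep.of ρQ) (f : G → Q)).1 f.2 g h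
    show i (f (g * h)) = ρP g (i (f h)) + i (f g)
    rw [h1, map_add]
    exact congrArg (· + i (f g)) (hiequiv g (f h))
  set βc : oneCocycles (Rep.of ρQ) →ₗ[ℤ] oneCocycles (Rep.of ρP) :=
    { toFun := fun f => ⟨fun g => i (f g), hβcoc f⟩
      map_add' := fun f f' => Subtype.ext (funext fun g => i.map_add (f g) (f' g))
      map_smul' := fun c f => Subtype.ext (funext fun g => i.map_smul c (f g)) } with hβc
  have hβcval : ∀ (f : oneCocycles (Rep.of ρQ)) (g : G),
      βc f g = i (f g) := fun f g => rfl
  have hle : oneCoboundaries (Rep.of ρQ) ≤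
      LinearMap.ker (πP.comp βc) := by
    intro f hf
    obtain ⟨x, hx⟩ := (mem_oneCoboundaries_iff f).1 hf
    rw [LinearMap.mem_ker, LinearMap.comp_apply, hπP0]
    refine (mem_oneCoboundaries_iff _).2 ⟨i x, fun g => ?_⟩
    show ρP g (i x) - i x = βc f g
    rw [hβcval, ← hiequiv, ← map_sub]
    exact congrArg i (hx g)
  set β' : H1old (Rep.of ρQ) →ₗ[ℤ] H1old (Rep.of ρP) :=
    Submodule.liftQ _ (πP.comp βc) hle with hβ'
  set β : H1old (Rep.of ρQ) →+ H1old (Rep.of ρP) := β'.toAddMonoidHom with hβ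
  have hβapp : ∀ f : oneCocycles (Rep.of ρQ),
      β (πQ f) = πP (βc f) := fun f => rfl
  have hπQsurj : Function.Surjective πQ := Submodule.mkQ_surjective _
  refine ⟨α, β, ?_, ?_, ?_⟩
  · -- injectivity of α
    rw [injective_iff_map_eq_zero]
    intro x hx
    obtain ⟨m, rfl⟩ := ZMod.intCast_surjective x
    rw [hαapp, hδapp, hπQ0] at hx
    obtain ⟨q, hq⟩ := (mem_oneCoboundaries_iff _).1 hx
    have hinv : s m - i q ∈ ρP.invariants := by
      intro g
      have h1 := congrArg i (hq g)
      rw [map_sub] at h1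
      have h2 : i ((Rep.of ρQ).ρ g q) = ρP g (i q) := hiequiv g q
      have h3 : i ((zc (s m)) g) = ρP g (s m) - s m := hzcval (s m) g
      have h4 : ρP g (i q) - i q = ρP g (s m) - s m := by
        rw [← h2, ← h3]; exact h1
      rw [map_sub, sub_eq_sub_iff_sub_eq_sub]
      exact h4.symm
    have hmmem : m ∈ Submodule.map φ ρP.invariants :=
      ⟨s m - i q, hinv, by rw [map_sub, hs, hφi, sub_zero]⟩
    rw [himg, Submodule.mem_span_singleton] at hmmem
    obtain ⟨a, ha⟩ := hmmem
    rw [ZMod.intCast_zmod_eq_zero_iff_dvd]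
    exact ⟨a, by rw [← ha, smul_eq_mul, mul_comm]⟩
  · -- surjectivity of β
    intro y
    obtain ⟨f, rfl⟩ := Submodule.mkQ_surjective _ y
    have hkerφ : ∀ g : G, φ (f g) = 0 := by
      intro g
      have hpow : ∀ k : ℕ, φ (f (g ^ k)) = k * φ (f g) := by
        intro k
        induction k with
        | zero =>
          simp only [pow_zero, Nat.cast_zero, zero_mul]
          rw [oneCocycles_map_one, map_zero]
        | succ k ih =>
          have h1 := (mem_oneCocycles_iff (A := Rep.of ρP) (f : G → P)).1 f.2 g (g ^ k)
          have h2 : φ ((Rep.of ρP).ρ g (f (g ^ k))) = φ (f (g ^ k)) := hφequiv g _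
          rw [pow_succ', h1, map_add, h2, ih]
          push_cast
          ring
      have h2 := hpow (orderOf g)
      rw [pow_orderOf_eq_one, oneCocycles_map_one, map_zero] at h2
      have h3 : ((orderOf g : ℕ) : ℤ) ≠ 0 := by
        exact_mod_cast (orderOf_pos g).ne'
      exact (mul_eq_zero.1 h2.symm).resolve_left h3
    have hfq : (fun g => j (f g)) ∈ oneCocycles (Rep.of ρQ) := by
      rw [mem_oneCocycles_iff]
      intro g h
      apply hi
      show i (j (f (g * h))) = i (ρQ g (j (f h)) + j (f g))
      rw [hij _ (hkerφ (g * h)), map_add, hiequiv, hij _ (hkerφ h), hij _ (hkerφ g)]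
      exact (mem_oneCocycles_iff (A := Rep.of ρP) (f : G → P)).1 f.2 g h
    refine ⟨πQ ⟨_, hfq⟩, ?_⟩
    show πP (βc ⟨_, hfq⟩) = πP f
    congr 1
    apply oneCocycles_ext
    intro g
    show i (j (f g)) = f g
    exact hij _ (hkerφ g)
  · -- range α = ker β
    ext y
    simp only [AddMonoidHom.mem_range, AddMonoidHom.mem_ker]
    constructor
    · rintro ⟨x, rfl⟩
      obtain ⟨m, rfl⟩ := ZMod.intCast_surjective x
      rw [hαapp, hδapp]
      show πP (βc (zc (s m))) = 0
      rw [hπP0]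
      refine (mem_oneCoboundaries_iff _).2 ⟨s m, fun g => ?_⟩
      show ρP g (s m) - s m = βc (zc (s m)) g
      rw [hβcval, hzcval]
    · intro hy
      obtain ⟨f, rfl⟩ := Submodule.mkQ_surjective _ y
      have hy' : πP (βc f) = 0 := hy
      rw [hπP0] at hy'
      obtain ⟨p, hp⟩ := (mem_oneCoboundaries_iff _).1 hy'
      refine ⟨((φ p : ℤ) : ZMod d), ?_⟩
      have hd2 : πQ (zc (s (φ p))) = πQ (zc p) := hdep _ _ (hs (φ p))
      rw [hαapp, hδapp, hd2]
      congr 1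
      apply oneCocycles_ext
      intro g
      apply hi
      rw [hzcval]
      have h1 := hp g
      rw [hβcval] at h1
      exact h1

/-- Let `G` be a finite group and `0 → Q → P → ℤ → 0` a short exact sequence of
`G`-modules, where `G` acts trivially on `ℤ`, `P` is `ℤ`-free, and the image of `P^G`
in `ℤ` is `dℤ` for a positive integer `d`. Then there is an exact sequence
`0 → ℤ/dℤ → H¹(G, Q) → H¹(G, P) → 0`. -/
theorem h1_ses_onto_int (G : Type) [Group G] [Finite G]
    (Q P : Type) [AddCommGroup Q] [Module ℤ Q] [AddCommGroup P] [Module ℤ P]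
    [Module.Free ℤ P]
    (ρQ : Representation ℤ G Q) (ρP : Representation ℤ G P)
    (i : Q →ₗ[ℤ] P) (hi : Function.Injective i)
    (hiequiv : ∀ g : G, ∀ x : Q, i (ρQ g x) = ρP g (i x))
    (φ : P →ₗ[ℤ] ℤ) (hφ : Function.Surjective φ)
    (hφequiv : ∀ g : G, ∀ x : P, φ (ρP g x) = φ x)
    (hexact : LinearMap.range i = LinearMap.ker φ)
    (d : ℕ) (hd : 0 < d)
    (himg : Submodule.map φ ρP.invariants = Submodule.span ℤ {(d : ℤ)}) :
    ∃ (α : ZMod d →+ H1 (Rep.of ρQ)) (β : H1 (Rep.of ρQ) →+ H1 (Rep.of ρP)),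
      Function.Injective α ∧ Function.Surjective β ∧
        AddMonoidHom.range α = AddMonoidHom.ker β := by
  obtain ⟨α, β, hα, hβ, hαβ⟩ := h1_ses_onto_int_aux G Q P ρQ ρP i hi hiequiv φ hφ hφequiv
    hexact d hd himg
  set eQ := H1oldEquiv (Rep.of ρQ)
  set eP := H1oldEquiv (Rep.of ρP)
  refine ⟨eQ.toAddMonoidHom.comp α,
    (eP.toAddMonoidHom.comp β).comp eQ.symm.toAddMonoidHom, ?_, ?_, ?_⟩
  · exact eQ.injective.comp hα
  · exact (eP.surjective.comp hβ).comp eQ.symm.surjective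
  · ext y
    simp only [AddMonoidHom.mem_range, AddMonoidHom.mem_ker, AddMonoidHom.coe_comp,
      Function.comp_apply, AddEquiv.coe_toAddMonoidHom]
    rw [map_eq_zero_iff eP eP.injective, ← AddMonoidHom.mem_ker, ← hαβ, AddMonoidHom.mem_range]
    constructor
    · rintro ⟨x, rfl⟩
      exact ⟨x, by simp⟩
    · rintro ⟨x, hx⟩
      exact ⟨x, by rw [hx]; simp⟩
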